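/- Let n ≥ 1 be an integer, 1 ≤ p < ∞ and 0 ≤ β < n. If f belongs to the vanishing-at-origin subspace L^{p,β}_0(ℝⁿ) and g ∈ L¹(ℝⁿ), then the convolution f ∗ g is defined almost everywhere and belongs to L^{p,β}_0(ℝⁿ); i.e. L^{p,β}_0 is invariant under convolution with integrable functions. -/

import Mathlib

open MeasureTheory Metric ENNReal Filter

noncomputable def morreyA (n : ℕ) (p β : ℝ)
    (f : EuclideanSpace ℝ (Fin n) → ℂ)
    (y : EuclideanSpace ℝ (Fin n)) (r : ℝ) : ℝ≥0∞ :=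
  ENNReal.ofReal (r ^ (-β)) * ∫⁻ x in ball y r, (‖f x‖₊ : ℝ≥0∞) ^ p

/-- The (global) Morrey norm `‖f‖_{L^{p,β}}`. -/
noncomputable def morreyNorm (n : ℕ) (p β : ℝ)
    (f : EuclideanSpace ℝ (Fin n) → ℂ) : ℝ≥0∞ :=
  ⨆ (y : EuclideanSpace ℝ (Fin n)) (r : ℝ) (_ : 0 < r),
    (morreyA n p β f y r) ^ (1 / p)

/-- Membership in the vanishing-at-origin subspace `L^{p,β}_0`. -/
def vanishAtOrigin (n : ℕ) (p β : ℝ) (f : EuclideanSpace ℝ (Fin n) → ℂ) : Prop :=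
  Tendsto
    (fun t : ℝ => ⨆ (y : EuclideanSpace ℝ (Fin n)) (r : ℝ) (_ : 0 < r) (_ : r ≤ t),
      morreyA n p β f y r)
    (nhdsWithin 0 (Set.Ioi 0)) (nhds 0)

/-- Membership in the vanishing-at-infinity subspace `L^{p,β}_∞`. -/
def vanishAtInfinity (n : ℕ) (p β : ℝ) (f : EuclideanSpace ℝ (Fin n) → ℂ) : Prop :=
  Tendsto
    (fun t : ℝ => ⨆ (y : EuclideanSpace ℝ (Fin n)) (r : ℝ) (_ : t ≤ r),
      morreyA n p β f y r)
    atTop (nhds 0)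

/-- Membership in the truncation subspace `L^{p,β}_*`. -/
def vanishTrunc (n : ℕ) (p β : ℝ) (f : EuclideanSpace ℝ (Fin n) → ℂ) : Prop :=
  Tendsto
    (fun N : ℝ => ⨆ (y : EuclideanSpace ℝ (Fin n)) (r : ℝ) (_ : 0 < r),
      ENNReal.ofReal (r ^ (-β)) *
        ∫⁻ x in ball y r ∩ {x : EuclideanSpace ℝ (Fin n) | N < ‖x‖},
          (‖f x‖₊ : ℝ≥0∞) ^ p)
    atTop (nhds 0)

section aux
variable {α : Type*} [MeasurableSpace α] {μ : Measure α}

lemma aux_le_one_add_rpow (a : ℝ≥0∞) {p : ℝ} (hp : 1 ≤ p) : a ≤ 1 + a ^ p := by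
  rcases le_total a 1 with h | h
  · exact h.trans le_self_add
  · calc a = a ^ (1:ℝ) := (ENNReal.rpow_one a).symm
      _ ≤ a ^ p := ENNReal.rpow_le_rpow_of_exponent_le h hp
      _ ≤ 1 + a ^ p := le_add_self

lemma aux_jensen (u w : α → ℝ≥0∞) (hu : Measurable u) (hw : Measurable w)
    {p : ℝ} (hp : 1 ≤ p) :
    (∫⁻ a, u a * w a ∂μ) ^ p ≤ (∫⁻ a, w a ∂μ) ^ (p - 1) * ∫⁻ a, u a ^ p * w a ∂μ := by
  rcases hp.eq_or_lt with h | h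
  · rw [← h]; simp
  have hpq : p.HolderConjugate (Real.conjExponent p) := Real.HolderConjugate.conjExponent h
  set q := Real.conjExponent p with hq
  have hp0 : (0:ℝ) < p := hpq.pos
  have hq0 : (0:ℝ) < q := hpq.symm.pos
  have hsplit : ∀ a, u a * w a = (u a * w a ^ (1/p)) * w a ^ (1/q) := by
    intro a
    rw [mul_assoc, ← ENNReal.rpow_add_of_nonneg _ _ (by positivity) (by positivity)]
    rw [show (1/p + 1/q) = 1 by rw [one_div, one_div]; exact hpq.inv_add_inv_eq_one,
      ENNReal.rpow_one]
  have hmeas1 : AEMeasurable (fun a => u a * w a ^ (1/p)) μ :=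
    (hu.mul ((ENNReal.continuous_rpow_const.measurable).comp hw)).aemeasurable
  have hmeas2 : AEMeasurable (fun a => w a ^ (1/q)) μ :=
    ((ENNReal.continuous_rpow_const.measurable).comp hw).aemeasurable
  have holder := ENNReal.lintegral_mul_le_Lp_mul_Lq μ hpq hmeas1 hmeas2
  have h1 : ∀ a, (u a * w a ^ (1/p)) ^ p = u a ^ p * w a := by
    intro a
    rw [ENNReal.mul_rpow_of_nonneg _ _ hp0.le, ← ENNReal.rpow_mul,
      one_div_mul_cancel hp0.ne', ENNReal.rpow_one]
  have h2 : ∀ a, ((w a) ^ (1/q)) ^ q = w a := by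
    intro a
    rw [← ENNReal.rpow_mul, one_div_mul_cancel hq0.ne', ENNReal.rpow_one]
  simp only [hsplit]
  calc (∫⁻ a, (u a * w a ^ (1/p)) * w a ^ (1/q) ∂μ) ^ p
      ≤ ((∫⁻ a, (u a * w a ^ (1/p)) ^ p ∂μ) ^ (1/p)
          * (∫⁻ a, (w a ^ (1/q)) ^ q ∂μ) ^ (1/q)) ^ p :=
        ENNReal.rpow_le_rpow holder hp0.le
    _ = (∫⁻ a, u a ^ p * w a ∂μ) * (∫⁻ a, w a ∂μ) ^ (p - 1) := by
        simp only [h1, h2]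
        rw [ENNReal.mul_rpow_of_nonneg _ _ hp0.le, ← ENNReal.rpow_mul, ← ENNReal.rpow_mul,
          one_div_mul_cancel hp0.ne', ENNReal.rpow_one,
          show 1/q * p = p - 1 by rw [hpq.conjugate_eq, one_div_div, div_mul_cancel₀ _ hp0.ne']]
    _ = (∫⁻ a, w a ∂μ) ^ (p - 1) * ∫⁻ a, u a ^ p * w a ∂μ := mul_comm _ _

end aux

lemma aux_translate {n : ℕ} (h : EuclideanSpace ℝ (Fin n) → ℝ≥0∞)
    (y z : EuclideanSpace ℝ (Fin n)) (r : ℝ) :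
    ∫⁻ x in ball y r, h (x - z) = ∫⁻ x in ball (y - z) r, h x := by
  have hmp : MeasurePreserving (fun x : EuclideanSpace ℝ (Fin n) => x - z) volume volume :=
    measurePreserving_sub_right volume z
  have hemb : MeasurableEmbedding (fun x : EuclideanSpace ℝ (Fin n) => x - z) :=
    (MeasurableEquiv.subRight z).measurableEmbedding
  have key := hmp.setLIntegral_comp_preimage_emb hemb h (ball (y - z) r)
  have hset : (fun x : EuclideanSpace ℝ (Fin n) => x - z) ⁻¹' ball (y - z) r = ball y r := by
    ext x
    simp only [Set.mem_preimage, mem_ball, dist_sub_right]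
  rw [hset] at key
  exact key

/-- `L^{p,β}_0` is invariant under convolution with integrable functions: if `f ∈ L^{p,β}_0`
and `g ∈ L¹`, then `f ∗ g` is defined a.e. and belongs to `L^{p,β}_0`. -/
theorem vanishAtOrigin_convolution_invariant (n : ℕ) (hn : 1 ≤ n) (p β : ℝ)
    (hp : 1 ≤ p) (hβ : 0 ≤ β) (hβn : β < n)
    (f g : EuclideanSpace ℝ (Fin n) → ℂ) (hf : Measurable f)
    (hfM : morreyNorm n p β f < ⊤) (hf0 : vanishAtOrigin n p β f)
    (hg : Integrable g) :
    (∀ᵐ x : EuclideanSpace ℝ (Fin n), Integrable (fun z => f (x - z) * g z)) ∧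
    morreyNorm n p β (fun x => ∫ z, f (x - z) * g z) < ⊤ ∧
    vanishAtOrigin n p β (fun x => ∫ z, f (x - z) * g z) := by
  have hp0 : (0:ℝ) < p := lt_of_lt_of_le zero_lt_one hp
  obtain ⟨g', hg'm, hgg'⟩ : ∃ g', Measurable g' ∧ g =ᵐ[volume] g' :=
    ⟨hg.1.mk g, hg.1.stronglyMeasurable_mk.measurable, hg.1.ae_eq_mk⟩
  have hconv_eq : (fun x : EuclideanSpace ℝ (Fin n) => ∫ z, f (x - z) * g z)
      = fun x => ∫ z, f (x - z) * g' z := by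
    funext x
    exact integral_congr_ae (hgg'.mono fun z hz => by dsimp only; rw [hz])
  rw [hconv_eq]
  set conv := fun x : EuclideanSpace ℝ (Fin n) => ∫ z, f (x - z) * g' z with hconvdef
  set I := ∫⁻ z, (‖g' z‖₊ : ℝ≥0∞) with hIdef
  have hg'int : Integrable g' := hg.congr hgg'
  have hItop : I ≠ ⊤ := lt_top_iff_ne_top.mp hg'int.2
  have hC : (I ^ (p-1) * I) ≠ ⊤ :=
    ENNReal.mul_ne_top (ENNReal.rpow_ne_top_of_nonneg (by linarith) hItop) hItop
  have hMp : morreyNorm n p β f ^ p ≠ ⊤ := ENNReal.rpow_ne_top_of_nonneg hp0.le hfM.ne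
  have hone : ∀ r : ℝ, 0 < r →
      ENNReal.ofReal (r ^ β) * ENNReal.ofReal (r ^ (-β)) = 1 := by
    intro r hr
    rw [← ENNReal.ofReal_mul (Real.rpow_nonneg hr.le β), ← Real.rpow_add hr, add_neg_cancel,
      Real.rpow_zero, ENNReal.ofReal_one]
  have hAf_eq : ∀ (y : EuclideanSpace ℝ (Fin n)) (r : ℝ), 0 < r →
      (∫⁻ x in ball y r, (‖f x‖₊ : ℝ≥0∞) ^ p) = ENNReal.ofReal (r ^ β) * morreyA n p β f y r := by
    intro y r hr
    rw [morreyA, ← mul_assoc, hone r hr, one_mul]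
  have hAM : ∀ (y : EuclideanSpace ℝ (Fin n)) (r : ℝ), 0 < r →
      morreyA n p β f y r ≤ morreyNorm n p β f ^ p := by
    intro y r hr
    have h1 : (morreyA n p β f y r) ^ (1/p) ≤ morreyNorm n p β f := by
      refine le_trans ?_ (le_iSup (fun y => ⨆ (r : ℝ) (_ : 0 < r),
        morreyA n p β f y r ^ (1/p)) y)
      refine le_trans ?_ (le_iSup (fun r : ℝ => ⨆ (_ : 0 < r), morreyA n p β f y r ^ (1/p)) r)
      exact le_iSup (fun _ : 0 < r => morreyA n p β f y r ^ (1/p)) hr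
    calc morreyA n p β f y r = (morreyA n p β f y r ^ (1/p)) ^ p := by
          rw [← ENNReal.rpow_mul, one_div_mul_cancel hp0.ne', ENNReal.rpow_one]
      _ ≤ _ := ENNReal.rpow_le_rpow h1 hp0.le
  have hFp : Measurable (Function.uncurry fun (x z : EuclideanSpace ℝ (Fin n)) =>
      (‖f (x - z)‖₊ : ℝ≥0∞) ^ p * (‖g' z‖₊ : ℝ≥0∞)) :=
    ((ENNReal.continuous_rpow_const.measurable).comp
      ((hf.comp (measurable_fst.sub measurable_snd)).enorm)).mul
      ((hg'm.comp measurable_snd).enorm)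
  have hH : Measurable fun x : EuclideanSpace ℝ (Fin n) =>
      ∫⁻ z, (‖f (x - z)‖₊ : ℝ≥0∞) ^ p * (‖g' z‖₊ : ℝ≥0∞) :=
    hFp.lintegral_prod_right'
  have hKey : ∀ (y : EuclideanSpace ℝ (Fin n)) (r : ℝ), 0 < r →
      morreyA n p β conv y r ≤ (I ^ (p-1) * I) * ⨆ y', morreyA n p β f y' r := by
    intro y r hr
    have step1 : ∀ x, (‖conv x‖₊ : ℝ≥0∞) ^ p ≤
        I ^ (p-1) * ∫⁻ z, (‖f (x - z)‖₊ : ℝ≥0∞) ^ p * (‖g' z‖₊ : ℝ≥0∞) := by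
      intro x
      have h1 : (‖conv x‖₊ : ℝ≥0∞) ≤ ∫⁻ z, (‖f (x - z)‖₊ : ℝ≥0∞) * (‖g' z‖₊ : ℝ≥0∞) := by
        calc (‖conv x‖₊ : ℝ≥0∞) ≤ ∫⁻ z, (‖f (x - z) * g' z‖₊ : ℝ≥0∞) :=
            enorm_integral_le_lintegral_enorm _
          _ = _ := by simp_rw [nnnorm_mul, ENNReal.coe_mul]
      calc (‖conv x‖₊ : ℝ≥0∞) ^ p
          ≤ (∫⁻ z, (‖f (x - z)‖₊ : ℝ≥0∞) * (‖g' z‖₊ : ℝ≥0∞)) ^ p :=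
            ENNReal.rpow_le_rpow h1 hp0.le
        _ ≤ I ^ (p-1) * ∫⁻ z, (‖f (x - z)‖₊ : ℝ≥0∞) ^ p * (‖g' z‖₊ : ℝ≥0∞) :=
            aux_jensen _ _ ((hf.comp (measurable_const.sub measurable_id)).enorm)
              hg'm.enorm hp
    have hin : ∀ z : EuclideanSpace ℝ (Fin n),
        (∫⁻ x in ball y r, (‖f (x - z)‖₊ : ℝ≥0∞) ^ p * (‖g' z‖₊ : ℝ≥0∞))
        ≤ ENNReal.ofReal (r ^ β) * (⨆ y', morreyA n p β f y' r) * (‖g' z‖₊ : ℝ≥0∞) := by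
      intro z
      have hmz : Measurable fun x : EuclideanSpace ℝ (Fin n) => (‖f (x - z)‖₊ : ℝ≥0∞) ^ p :=
        (ENNReal.continuous_rpow_const.measurable).comp
          ((hf.comp (measurable_id.sub measurable_const)).enorm)
      rw [lintegral_mul_const _ hmz]
      have ht := aux_translate (fun x => (‖f x‖₊ : ℝ≥0∞) ^ p) y z r
      rw [ht, hAf_eq (y - z) r hr]
      gcongr
      exact le_iSup (fun y' => morreyA n p β f y' r) (y - z)
    have step2 : (∫⁻ x in ball y r, (‖conv x‖₊ : ℝ≥0∞) ^ p) ≤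
        I ^ (p-1) * (ENNReal.ofReal (r ^ β) * (⨆ y', morreyA n p β f y' r) * I) := by
      calc ∫⁻ x in ball y r, (‖conv x‖₊ : ℝ≥0∞) ^ p
          ≤ ∫⁻ x in ball y r, I ^ (p-1) *
              ∫⁻ z, (‖f (x - z)‖₊ : ℝ≥0∞) ^ p * (‖g' z‖₊ : ℝ≥0∞) :=
            lintegral_mono fun x => step1 x
        _ = I ^ (p-1) * ∫⁻ x in ball y r,
              ∫⁻ z, (‖f (x - z)‖₊ : ℝ≥0∞) ^ p * (‖g' z‖₊ : ℝ≥0∞) :=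
            lintegral_const_mul _ hH
        _ = I ^ (p-1) * ∫⁻ z, ∫⁻ x in ball y r,
              (‖f (x - z)‖₊ : ℝ≥0∞) ^ p * (‖g' z‖₊ : ℝ≥0∞) := by
            rw [lintegral_lintegral_swap hFp.aemeasurable]
        _ ≤ I ^ (p-1) * ∫⁻ z, ENNReal.ofReal (r ^ β) * (⨆ y', morreyA n p β f y' r)
              * (‖g' z‖₊ : ℝ≥0∞) :=
            mul_le_mul_right (lintegral_mono hin) _
        _ = I ^ (p-1) * (ENNReal.ofReal (r ^ β) * (⨆ y', morreyA n p β f y' r) * I) := by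
            rw [lintegral_const_mul (f := fun z => (‖g' z‖₊ : ℝ≥0∞)) _ hg'm.enorm]
    calc morreyA n p β conv y r
        = ENNReal.ofReal (r ^ (-β)) * ∫⁻ x in ball y r, (‖conv x‖₊ : ℝ≥0∞) ^ p := rfl
      _ ≤ ENNReal.ofReal (r ^ (-β)) *
          (I ^ (p-1) * (ENNReal.ofReal (r ^ β) * (⨆ y', morreyA n p β f y' r) * I)) := by
          gcongr
      _ = (ENNReal.ofReal (r ^ β) * ENNReal.ofReal (r ^ (-β))) *
          ((I ^ (p-1) * I) * ⨆ y', morreyA n p β f y' r) := by ring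
      _ = (I ^ (p-1) * I) * ⨆ y', morreyA n p β f y' r := by rw [hone r hr, one_mul]
  refine ⟨?_, ?_, ?_⟩
  · -- a.e. integrability
    set K : EuclideanSpace ℝ (Fin n) → ℝ≥0∞ :=
      fun x => ∫⁻ z, (‖f (x - z)‖₊ : ℝ≥0∞) * (‖g' z‖₊ : ℝ≥0∞) with hKdef
    have hF1 : Measurable (Function.uncurry fun (x z : EuclideanSpace ℝ (Fin n)) =>
        (‖f (x - z)‖₊ : ℝ≥0∞) * (‖g' z‖₊ : ℝ≥0∞)) :=
      ((hf.comp (measurable_fst.sub measurable_snd)).enorm).mul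
        ((hg'm.comp measurable_snd).enorm)
    have hKmeas : Measurable K := hF1.lintegral_prod_right'
    have hball : ∀ m : ℕ,
        ∀ᵐ x ∂(volume.restrict (ball (0:EuclideanSpace ℝ (Fin n)) ((m:ℝ)+1))), K x < ⊤ := by
      intro m
      apply ae_lt_top hKmeas
      have hR : (0:ℝ) < (m:ℝ) + 1 := by positivity
      set D : ℝ≥0∞ := volume (ball (0:EuclideanSpace ℝ (Fin n)) ((m:ℝ)+1)) +
        ENNReal.ofReal (((m:ℝ)+1) ^ β) * morreyNorm n p β f ^ p with hDdef
      have hDtop : D ≠ ⊤ :=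
        ENNReal.add_ne_top.mpr ⟨measure_ball_lt_top.ne,
          ENNReal.mul_ne_top ENNReal.ofReal_ne_top hMp⟩
      have hball_bound : ∀ w : EuclideanSpace ℝ (Fin n),
          (∫⁻ x in ball w ((m:ℝ)+1), (‖f x‖₊ : ℝ≥0∞)) ≤ D := by
        intro w
        calc ∫⁻ x in ball w ((m:ℝ)+1), (‖f x‖₊ : ℝ≥0∞)
            ≤ ∫⁻ x in ball w ((m:ℝ)+1), (1 + (‖f x‖₊ : ℝ≥0∞) ^ p) :=
              lintegral_mono fun x => aux_le_one_add_rpow _ hp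
          _ = volume (ball w ((m:ℝ)+1)) + ∫⁻ x in ball w ((m:ℝ)+1), (‖f x‖₊ : ℝ≥0∞) ^ p := by
              rw [lintegral_add_left measurable_const, lintegral_one,
                Measure.restrict_apply_univ]
          _ ≤ D := by
              rw [hDdef]
              refine add_le_add (le_of_eq (Measure.addHaar_ball_center _ _ _)) ?_
              rw [hAf_eq w _ hR]
              exact mul_le_mul_right (hAM w _ hR) _
      have htot : (∫⁻ x in ball (0:EuclideanSpace ℝ (Fin n)) ((m:ℝ)+1), K x) ≤ D * I := by
        calc ∫⁻ x in ball (0:EuclideanSpace ℝ (Fin n)) ((m:ℝ)+1), K x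
            = ∫⁻ z, ∫⁻ x in ball (0:EuclideanSpace ℝ (Fin n)) ((m:ℝ)+1),
                (‖f (x - z)‖₊ : ℝ≥0∞) * (‖g' z‖₊ : ℝ≥0∞) :=
              lintegral_lintegral_swap hF1.aemeasurable
          _ ≤ ∫⁻ z, D * (‖g' z‖₊ : ℝ≥0∞) := by
              refine lintegral_mono fun z => ?_
              have hmz : Measurable fun x : EuclideanSpace ℝ (Fin n) => (‖f (x - z)‖₊ : ℝ≥0∞) :=
                (hf.comp (measurable_id.sub measurable_const)).enorm
              rw [lintegral_mul_const _ hmz,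
                aux_translate (fun x => (‖f x‖₊ : ℝ≥0∞)) 0 z ((m:ℝ)+1)]
              exact mul_le_mul_left (hball_bound (0 - z)) _
          _ = D * I := lintegral_const_mul _ hg'm.enorm
      exact (lt_of_le_of_lt htot (ENNReal.mul_lt_top hDtop.lt_top hItop.lt_top)).ne
    have hae : ∀ᵐ x : EuclideanSpace ℝ (Fin n), K x < ⊤ := by
      rw [ae_iff]
      have hsub2 : {x : EuclideanSpace ℝ (Fin n) | ¬ K x < ⊤} ⊆
          ⋃ m : ℕ, ({x : EuclideanSpace ℝ (Fin n) | ¬ K x < ⊤} ∩ ball 0 ((m:ℝ)+1)) := by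
        intro x hx
        obtain ⟨m, hm⟩ := exists_nat_gt ‖x‖
        refine Set.mem_iUnion.mpr ⟨m, hx, ?_⟩
        rw [mem_ball, dist_zero_right]
        linarith
      refine measure_mono_null hsub2 (measure_iUnion_null fun m => ?_)
      have := ae_iff.mp (hball m)
      rwa [Measure.restrict_apply' measurableSet_ball] at this
    refine hae.mono fun x hx => ?_
    refine ⟨(hf.comp (measurable_const.sub measurable_id)).aestronglyMeasurable.mul hg.1, ?_⟩
    have heq : (∫⁻ z, (‖f (x - z) * g z‖₊ : ℝ≥0∞)) = K x := by
      refine lintegral_congr_ae (hgg'.mono fun z hz => ?_)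
      simp [nnnorm_mul, ENNReal.coe_mul, hz]
    show (∫⁻ z, (‖f (x - z) * g z‖₊ : ℝ≥0∞)) < ⊤
    rw [heq]
    exact hx
  · -- finiteness of Morrey norm
    have hle : morreyNorm n p β conv ≤
        ((I ^ (p-1) * I) * morreyNorm n p β f ^ p) ^ (1/p) := by
      refine iSup_le fun y => iSup_le fun r => iSup_le fun hr => ?_
      refine ENNReal.rpow_le_rpow ?_ (one_div_nonneg.mpr hp0.le)
      refine (hKey y r hr).trans ?_
      exact mul_le_mul_right (iSup_le fun y' => hAM y' r hr) _
    exact lt_of_le_of_lt hle (ENNReal.rpow_lt_top_of_nonneg (one_div_nonneg.mpr hp0.le)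
      (ENNReal.mul_ne_top hC hMp))
  · -- vanishing at origin
    have hbound : ∀ t : ℝ,
        (⨆ (y : EuclideanSpace ℝ (Fin n)) (r : ℝ) (_ : 0 < r) (_ : r ≤ t),
          morreyA n p β conv y r)
        ≤ (I ^ (p-1) * I) * ⨆ (y : EuclideanSpace ℝ (Fin n)) (r : ℝ) (_ : 0 < r) (_ : r ≤ t),
          morreyA n p β f y r := by
      intro t
      refine iSup_le fun y => iSup_le fun r => iSup_le fun hr => iSup_le fun hrt => ?_
      refine (hKey y r hr).trans ?_
      refine mul_le_mul_right (iSup_le fun y' => ?_) _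
      refine le_trans ?_ (le_iSup (fun y => ⨆ (r : ℝ) (_ : 0 < r) (_ : r ≤ t),
        morreyA n p β f y r) y')
      refine le_trans ?_ (le_iSup (fun r : ℝ => ⨆ (_ : 0 < r) (_ : r ≤ t),
        morreyA n p β f y' r) r)
      refine le_trans ?_ (le_iSup (fun _ : 0 < r => ⨆ (_ : r ≤ t), morreyA n p β f y' r) hr)
      exact le_iSup (fun _ : r ≤ t => morreyA n p β f y' r) hrt
    have h2 : Tendsto (fun t : ℝ => (I ^ (p-1) * I) *
        ⨆ (y : EuclideanSpace ℝ (Fin n)) (r : ℝ) (_ : 0 < r) (_ : r ≤ t),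
          morreyA n p β f y r)
        (nhdsWithin 0 (Set.Ioi 0)) (nhds 0) := by
      have := ENNReal.Tendsto.const_mul hf0 (Or.inr hC)
      rwa [mul_zero] at this
    exact tendsto_of_tendsto_of_tendsto_of_le_of_le tendsto_const_nhds h2
      (fun t => zero_le) hbound
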